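/- Let m > 2 and let Q be a Finset of functions (Fin m → ZMod 2) → ZMod 4 all of whose elements are bent (i.e., Q is a quaternary constant-amplitude code of length 2^m). Then Q.card < 4 ^ (∑_{j=0}^{(m+1)/2} Nat.choose m j), where (m+1)/2 is natural-number division (equal to ⌈m/2⌉). Equivalently, the rate of Q is strictly less than 2^{1-m} · ∑_{j=0}^{⌈m/2⌉} C(m,j). -/

import Mathlib

/-- The Fourier transform of a `ZMod 4`-valued generalized Boolean function. -/
noncomputable def fourier4 {m : ℕ} (f : (Fin m → ZMod 2) → ZMod 4) (u : Fin m → ZMod 2) : ℂ :=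
  ∑ x : Fin m → ZMod 2, Complex.I ^ (f x).val * (-1 : ℂ) ^ (∑ j, u j * x j).val

open Finset

variable {m : ℕ}


def chi (s : ZMod 2) : ℤ := if s = 0 then 1 else -1

lemma chi_add : ∀ s t : ZMod 2, chi (s + t) = chi s * chi t := by decide

lemma zmod2_cases : ∀ z : ZMod 2, z = 0 ∨ z = 1 := by decide

def cube (S : Finset (Fin m)) : Finset (Fin m → ZMod 2) :=
  Finset.univ.filter (fun x => ∀ j ∉ S, x j = 0)

lemma mem_cube {S : Finset (Fin m)} {x : Fin m → ZMod 2} :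
    x ∈ cube S ↔ ∀ j ∉ S, x j = 0 := by simp [cube]

def ej (j : Fin m) : Fin m → ZMod 2 := fun i => if i = j then 1 else 0

lemma cube_empty : (cube (∅ : Finset (Fin m))) = {0} := by
  ext x
  simp only [mem_cube, Finset.mem_singleton]
  constructor
  · intro h; funext j; exact h j (by simp)
  · intro h j _; rw [h]; rfl

lemma add_ej_ej (w : Fin m → ZMod 2) (j : Fin m) : w + ej j + ej j = w := by
  funext i
  have : ∀ z v : ZMod 2, z + v + v = z := by decide
  simp only [Pi.add_apply]
  exact this _ _

lemma sum_cube_insert {M : Type*} [AddCommMonoid M] {j : Fin m} {T : Finset (Fin m)}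
    (hj : j ∉ T) (F : (Fin m → ZMod 2) → M) :
    ∑ u ∈ cube (insert j T), F u = ∑ u ∈ cube T, F u + ∑ u ∈ cube T, F (u + ej j) := by
  have hsplit : cube (insert j T) = (cube T) ∪ (cube T).image (· + ej j) := by
    ext u
    simp only [mem_cube, Finset.mem_union, Finset.mem_image]
    constructor
    · intro h
      rcases zmod2_cases (u j) with h0 | h1
      · left; intro i hi
        by_cases hij : i = j
        · rw [hij]; exact h0
        · exact h i (by simp [hij, hi])
      · right
        refine ⟨u + ej j, ?_, add_ej_ej u j⟩
        intro i hi
        by_cases hij : i = j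
        · subst hij; simp only [Pi.add_apply, ej, if_pos rfl, h1]; decide
        · have := h i (by simp [hij, hi])
          simp [ej, hij, this]
    · intro h
      rcases h with h | ⟨v, hv, rfl⟩
      · intro i hi
        exact h i (fun hiT => hi (Finset.mem_insert_of_mem hiT))
      · intro i hi
        have hij : i ≠ j := fun hh => hi (hh ▸ Finset.mem_insert_self j T)
        have := hv i (fun hiT => hi (Finset.mem_insert_of_mem hiT))
        simp [ej, hij, this]
  have hdisj : Disjoint (cube T) ((cube T).image (· + ej j)) := by
    rw [Finset.disjoint_left]
    intro u hu hu2
    rcases Finset.mem_image.mp hu2 with ⟨v, hv, hveq⟩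
    have h1 : u j = 0 := mem_cube.mp hu j hj
    have h2 : v j = 0 := mem_cube.mp hv j hj
    have h3 : (v + ej j) j = 1 := by simp only [Pi.add_apply, ej, if_pos rfl, h2]; decide
    rw [hveq] at h3
    rw [h1] at h3
    exact absurd h3 (by decide)
  rw [hsplit, Finset.sum_union hdisj, Finset.sum_image (fun a _ b _ h => by
    have := congrArg (· + ej j) h
    simpa [add_ej_ej] using this)]

lemma dot_add_ej (u x : Fin m → ZMod 2) (j : Fin m) :
    (∑ i, (u + ej j) i * x i) = (∑ i, u i * x i) + x j := by
  have : ∀ i, (u + ej j) i * x i = u i * x i + (if i = j then x i else 0) := by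
    intro i
    by_cases hij : i = j <;> simp [ej, hij, add_mul]
  rw [Finset.sum_congr rfl (fun i _ => this i), Finset.sum_add_distrib]
  congr 1
  rw [Finset.sum_ite_eq' Finset.univ j (fun i => x i)]
  simp

lemma sum_cube_chi (T : Finset (Fin m)) (x : Fin m → ZMod 2) :
    ∑ u ∈ cube T, chi (∑ j, u j * x j)
      = if ∀ j ∈ T, x j = 0 then 2 ^ T.card else 0 := by
  induction T using Finset.induction_on with
  | empty =>
    rw [cube_empty]
    simp [chi]
  | @insert j T hj ih =>
    rw [sum_cube_insert hj]
    have h2 : ∑ u ∈ cube T, chi (∑ i, (u + ej j) i * x i)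
        = chi (x j) * ∑ u ∈ cube T, chi (∑ i, u i * x i) := by
      rw [Finset.mul_sum]
      refine Finset.sum_congr rfl (fun u _ => ?_)
      rw [dot_add_ej, chi_add, mul_comm]
    rw [h2, ih]
    rcases zmod2_cases (x j) with h0 | h1
    · have hcj : chi (x j) = 1 := by rw [h0]; rfl
      by_cases hall : ∀ i ∈ T, x i = 0
      · have hall' : ∀ i ∈ insert j T, x i = 0 := by
          intro i hi
          rcases Finset.mem_insert.mp hi with rfl | hiT
          · exact h0
          · exact hall i hiT
        rw [if_pos hall, if_pos hall', hcj, Finset.card_insert_of_notMem hj]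
        ring
      · have hall' : ¬ ∀ i ∈ insert j T, x i = 0 := by
          intro hc; exact hall (fun i hi => hc i (Finset.mem_insert_of_mem hi))
        rw [if_neg hall, if_neg hall']; ring
    · have hcj : chi (x j) = -1 := by rw [h1]; rfl
      have hall' : ¬ ∀ i ∈ insert j T, x i = 0 := by
        intro hc
        have := hc j (Finset.mem_insert_self j T)
        rw [h1] at this; exact absurd this (by decide)
      rw [if_neg hall', hcj]
      ring

lemma card_cube (T : Finset (Fin m)) : ((cube T).card : ℤ) = 2 ^ T.card := by
  have := sum_cube_chi T 0
  simp only [Pi.zero_apply, mul_zero, Finset.sum_const_zero] at this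
  have hchi : chi 0 = 1 := rfl
  rw [Finset.sum_congr rfl (fun u _ => hchi)] at this
  simpa using this

def Wt (p : (Fin m → ZMod 2) → ZMod 2) (u : Fin m → ZMod 2) : ℤ :=
  ∑ x : Fin m → ZMod 2, chi (p x + ∑ j, u j * x j)

lemma poisson (p : (Fin m → ZMod 2) → ZMod 2) (S : Finset (Fin m)) :
    ∑ u ∈ cube Sᶜ, Wt p u = 2 ^ (m - S.card) * ∑ x ∈ cube S, chi (p x) := by
  unfold Wt
  rw [Finset.sum_comm]
  have step : ∀ x : Fin m → ZMod 2,
      ∑ u ∈ cube Sᶜ, chi (p x + ∑ j, u j * x j)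
        = chi (p x) * (if x ∈ cube S then 2 ^ (m - S.card) else 0) := by
    intro x
    have h1 : ∑ u ∈ cube Sᶜ, chi (p x + ∑ j, u j * x j)
        = chi (p x) * ∑ u ∈ cube Sᶜ, chi (∑ j, u j * x j) := by
      rw [Finset.mul_sum]
      exact Finset.sum_congr rfl (fun u _ => by rw [chi_add])
    rw [h1, sum_cube_chi]
    congr 1
    have hcond : (∀ j ∈ Sᶜ, x j = 0) ↔ x ∈ cube S := by
      rw [mem_cube]
      constructor
      · intro h j hj; exact h j (Finset.mem_compl.mpr hj)
      · intro h j hj; exact h j (Finset.mem_compl.mp hj)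
    have hcard : (Sᶜ : Finset (Fin m)).card = m - S.card := by
      rw [Finset.card_compl]
      simp
    by_cases hc : x ∈ cube S
    · rw [if_pos (hcond.mpr hc), if_pos hc, hcard]
    · rw [if_neg (fun hh => hc (hcond.mp hh)), if_neg hc]
  rw [Finset.sum_congr rfl (fun x _ => step x)]
  rw [Finset.mul_sum]
  rw [← Finset.sum_filter_add_sum_filter_not Finset.univ (fun x => x ∈ cube S)]
  have hfil : Finset.univ.filter (fun x => x ∈ cube S) = cube S := by
    ext x; simp
  rw [hfil]
  have hz : ∑ x ∈ Finset.univ.filter (fun x => ¬ x ∈ cube S),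
      chi (p x) * (if x ∈ cube S then 2 ^ (m - S.card) else 0) = 0 := by
    refine Finset.sum_eq_zero (fun x hx => ?_)
    rw [if_neg (Finset.mem_filter.mp hx).2]
    ring
  rw [hz, add_zero]
  refine Finset.sum_congr rfl (fun x hx => ?_)
  rw [if_pos hx]
  ring

def wtN (p : (Fin m → ZMod 2) → ZMod 2) (S : Finset (Fin m)) : ℕ :=
  ((cube S).filter (fun x => p x = 1)).card

lemma sum_chi_eq (p : (Fin m → ZMod 2) → ZMod 2) (S : Finset (Fin m)) :
    ∑ x ∈ cube S, chi (p x) = 2 ^ S.card - 2 * (wtN p S : ℤ) := by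
  have hpt : ∀ s : ZMod 2, chi s = 1 - 2 * (if s = 1 then (1:ℤ) else 0) := by decide
  rw [Finset.sum_congr rfl (fun x _ => hpt (p x)), Finset.sum_sub_distrib]
  rw [Finset.sum_const, ← Finset.mul_sum]
  have hb : ∑ x ∈ cube S, (if p x = 1 then (1:ℤ) else 0) = (wtN p S : ℤ) := by
    rw [Finset.sum_boole]
    rfl
  rw [hb]
  have := card_cube S
  rw [nsmul_eq_mul, this]
  ring

def gam (p : (Fin m → ZMod 2) → ZMod 2) (S : Finset (Fin m)) : ZMod 2 :=
  ∑ x ∈ cube S, p x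

lemma gam_eq_wt (p : (Fin m → ZMod 2) → ZMod 2) (S : Finset (Fin m)) :
    gam p S = (wtN p S : ZMod 2) := by
  unfold gam wtN
  have hpt : ∀ s : ZMod 2, s = if s = 1 then (1 : ZMod 2) else 0 := by decide
  rw [Finset.sum_congr rfl (fun x _ => hpt (p x)), Finset.sum_boole]

lemma gam_eq_zero_of_even {p : (Fin m → ZMod 2) → ZMod 2} {S : Finset (Fin m)}
    (h : (2:ℤ) ∣ (wtN p S : ℤ)) : gam p S = 0 := by
  rw [gam_eq_wt]
  have h2 : (2:ℕ) ∣ wtN p S := by exact_mod_cast h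
  exact (ZMod.natCast_eq_zero_iff _ _).mpr h2

lemma sq_base_two : ∀ x y : ℤ, x^2 + y^2 = 2 → x = 1 ∨ x = -1 := by
  intro x y h
  have hx2 : x^2 ≤ 2 := by nlinarith [sq_nonneg y]
  obtain ⟨hxl, hxr⟩ : -1 ≤ x ∧ x ≤ 1 := by constructor <;> nlinarith
  have hy2 : y^2 ≤ 2 := by nlinarith [sq_nonneg x]
  obtain ⟨hyl, hyr⟩ : -1 ≤ y ∧ y ≤ 1 := by constructor <;> nlinarith
  interval_cases x <;> interval_cases y <;> omega

lemma sq_base_one : ∀ x y : ℤ, x^2 + y^2 = 1 → x = 0 ∨ x = 1 ∨ x = -1 := by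
  intro x y h
  obtain ⟨hxl, hxr⟩ : -1 ≤ x ∧ x ≤ 1 := by constructor <;> nlinarith [sq_nonneg y]
  interval_cases x <;> omega

lemma both_even {x y : ℤ} {c : ℤ} (h : x^2 + y^2 = 4 * c) : (2 ∣ x) ∧ (2 ∣ y) := by
  rcases Int.even_or_odd x with hex | hox
  · rcases Int.even_or_odd y with hey | hoy
    · exact ⟨hex.two_dvd, hey.two_dvd⟩
    · exfalso
      rcases hex with ⟨a, ha⟩
      rcases hoy with ⟨b, hb⟩
      subst ha hb
      have hdd : (4:ℤ) ∣ 1 := ⟨c - (a*a + b*b + b), by ring_nf; ring_nf at h; linarith⟩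
      norm_num at hdd
  · rcases Int.even_or_odd y with hey | hoy
    · exfalso
      rcases hox with ⟨a, ha⟩
      rcases hey with ⟨b, hb⟩
      subst ha hb
      have hdd : (4:ℤ) ∣ 1 := ⟨c - (a*a + b*b + a), by ring_nf; ring_nf at h; linarith⟩
      norm_num at hdd
    · exfalso
      rcases hox with ⟨a, ha⟩
      rcases hoy with ⟨b, hb⟩
      subst ha hb
      have hdd : (4:ℤ) ∣ 2 := ⟨c - (a*a + a + b*b + b), by ring_nf; ring_nf at h; linarith⟩
      norm_num at hdd

lemma sq_two_pow_odd : ∀ s : ℕ, ∀ x y : ℤ, x^2 + y^2 = 2^(2*s+1) → x = 2^s ∨ x = -2^s := by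
  intro s
  induction s with
  | zero => intro x y h; simpa using sq_base_two x y (by simpa using h)
  | succ n ih =>
    intro x y h
    have h4 : x^2 + y^2 = 4 * 2^(2*n+1) := by
      rw [h]; ring
    obtain ⟨⟨a, ha⟩, ⟨b, hb⟩⟩ := both_even h4
    subst ha hb
    have h' : a^2 + b^2 = 2^(2*n+1) := by nlinarith [h4]
    rcases ih a b h' with h1 | h1 <;> [left; right] <;> rw [h1] <;> ring

lemma sq_two_pow_even : ∀ s : ℕ, ∀ x y : ℤ, x^2 + y^2 = 2^(2*s) →
    x = 0 ∨ x = 2^s ∨ x = -2^s := by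
  intro s
  induction s with
  | zero => intro x y h; simpa using sq_base_one x y (by simpa using h)
  | succ n ih =>
    intro x y h
    have h4 : x^2 + y^2 = 4 * 2^(2*n) := by
      rw [h]; ring
    obtain ⟨⟨a, ha⟩, ⟨b, hb⟩⟩ := both_even h4
    subst ha hb
    have h' : a^2 + b^2 = 2^(2*n) := by nlinarith [h4]
    rcases ih a b h' with h1 | h1 | h1
    · left; rw [h1]; ring
    · right; left; rw [h1]; ring
    · right; right; rw [h1]; ring

lemma classify {x y : ℤ} (hm : 0 < m) (hW : x^2 + y^2 = 2^(m+1)) :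
    ∃ t : ℤ, x = 2^((m+1)/2) * t ∧ (t = 0 ∨ t = 1 ∨ t = -1) ∧ (Even m → t = 1 ∨ t = -1) := by
  rcases Nat.even_or_odd m with he | ho
  · obtain ⟨s, hs⟩ := he
    have hm1 : m + 1 = 2*s + 1 := by omega
    have hd : (m+1)/2 = s := by omega
    rw [hm1] at hW
    rcases sq_two_pow_odd s x y hW with h1 | h1
    · exact ⟨1, by rw [hd, h1]; ring, by tauto, fun _ => by tauto⟩
    · exact ⟨-1, by rw [hd, h1]; ring, by tauto, fun _ => by tauto⟩
  · obtain ⟨s, hs⟩ := ho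
    have hm1 : m + 1 = 2*(s+1) := by omega
    have hd : (m+1)/2 = s+1 := by omega
    have hodd : ¬ Even m := by
      rw [Nat.even_iff]; omega
    rw [hm1] at hW
    rcases sq_two_pow_even (s+1) x y hW with h1 | h1 | h1
    · exact ⟨0, by rw [hd, h1]; ring, by tauto, fun hc => absurd hc hodd⟩
    · exact ⟨1, by rw [hd, h1]; ring, by tauto, fun hc => absurd hc hodd⟩
    · exact ⟨-1, by rw [hd, h1]; ring, by tauto, fun hc => absurd hc hodd⟩

lemma cancel_two_pow {a : ℕ} {w : ℤ} (h : (2:ℤ)^(a+1) ∣ 2^a * w) : (2:ℤ) ∣ w := by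
  obtain ⟨c, hc⟩ := h
  have h2 : (2:ℤ)^a * w = 2^a * (2 * c) := by rw [hc]; ring
  have := mul_left_cancel₀ (a := (2:ℤ)^a) (pow_ne_zero a two_ne_zero) h2
  exact ⟨c, this⟩

lemma core_p (hm : 2 < m) (p : (Fin m → ZMod 2) → ZMod 2)
    (hcl : ∀ u : Fin m → ZMod 2, ∃ t : ℤ, Wt p u = 2^((m+1)/2) * t ∧
      (t = 0 ∨ t = 1 ∨ t = -1) ∧ (Even m → t = 1 ∨ t = -1))
    (S : Finset (Fin m)) (hS : (m+1)/2 < S.card) : gam p S = 0 := by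
  set d := (m+1)/2 with hd
  set k := S.card with hk
  have hkm : k ≤ m := by
    have := Finset.card_le_univ S
    simpa [hk] using this
  choose t ht1 ht2 ht3 using hcl
  set T : ℤ := ∑ u ∈ cube Sᶜ, t u with hT
  have eq1 : ∑ u ∈ cube Sᶜ, Wt p u = 2^d * T := by
    rw [hT, Finset.mul_sum]
    exact Finset.sum_congr rfl (fun u _ => ht1 u)
  have eq2 : ∑ u ∈ cube Sᶜ, Wt p u = 2^(m-k) * (2^k - 2 * (wtN p S : ℤ)) := by
    rw [poisson p S, sum_chi_eq]
  have eqm : (2:ℤ)^(m-k) * 2^k = 2^m := by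
    rw [← pow_add]
    congr 1
    omega
  have eq3 : 2^(m-k+1) * (wtN p S : ℤ) = 2^m - 2^d * T := by
    rw [← eq1, eq2]
    rw [mul_sub, ← mul_assoc, eqm]
    rw [pow_succ]
    ring
  -- goal: 2 ∣ wtN
  refine gam_eq_zero_of_even ?_
  rcases Nat.even_or_odd m with hme | hmo
  · -- m even
    by_cases hkm' : k = m
    · -- k = m : 2 * wt = 2^m - 2^d*T, and 4 divides RHS
      have hmk1 : m - k + 1 = 1 := by omega
      rw [hmk1] at eq3
      have hdvd : (2:ℤ)^2 ∣ 2^m - 2^d * T := by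
        refine dvd_sub ?_ (Dvd.dvd.mul_right ?_ T)
        · exact pow_dvd_pow 2 (by omega)
        · refine pow_dvd_pow 2 ?_
          rcases hme with ⟨s, hs⟩
          omega
      rw [pow_one] at eq3
      rw [← eq3] at hdvd
      exact cancel_two_pow (a := 1) (by simpa using hdvd)
    · -- k < m : T is even
      have hkl : k < m := lt_of_le_of_ne hkm hkm'
      have hTeven : (2:ℤ) ∣ T := by
        have hsub : (2:ℤ) ∣ T - ((cube Sᶜ).card : ℤ) := by
          have : T - ((cube Sᶜ).card : ℤ) = ∑ u ∈ cube Sᶜ, (t u - 1) := by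
            rw [Finset.sum_sub_distrib, Finset.sum_const, hT]
            push_cast
            ring
          rw [this]
          refine Finset.dvd_sum (fun u _ => ?_)
          rcases ht3 u hme with h1 | h1 <;> rw [h1] <;> norm_num
        have hcard : ((cube Sᶜ).card : ℤ) = 2^(m-k) := by
          have := card_cube (Sᶜ : Finset (Fin m))
          rw [this, Finset.card_compl]
          congr 1
          simp [hk]
        have h2c : (2:ℤ) ∣ ((cube Sᶜ).card : ℤ) := by
          rw [hcard]
          exact dvd_pow_self 2 (by omega)
        omega
      obtain ⟨T', hT'⟩ := hTeven
      have hdvd : (2:ℤ)^(m-k+2) ∣ 2^(m-k+1) * (wtN p S : ℤ) := by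
        rw [eq3, hT']
        have h1 : (2:ℤ)^(m-k+2) ∣ 2^m := pow_dvd_pow 2 (by omega)
        have h2 : (2:ℤ)^(m-k+2) ∣ 2^d * (2*T') := by
          have : (2:ℤ)^d * (2*T') = 2^(d+1) * T' := by rw [pow_succ]; ring
          rw [this]
          refine Dvd.dvd.mul_right (pow_dvd_pow 2 ?_) T'
          rcases hme with ⟨s, hs⟩
          omega
        exact dvd_sub h1 h2
      exact cancel_two_pow (a := m-k+1) (by simpa [show m-k+1+1 = m-k+2 by omega] using hdvd)
  · -- m odd : direct divisibility
    have hdvd : (2:ℤ)^(m-k+2) ∣ 2^(m-k+1) * (wtN p S : ℤ) := by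
      rw [eq3]
      have h1 : (2:ℤ)^(m-k+2) ∣ 2^m := pow_dvd_pow 2 (by omega)
      have h2 : (2:ℤ)^(m-k+2) ∣ 2^d * T := by
        refine Dvd.dvd.mul_right (pow_dvd_pow 2 ?_) T
        rcases hmo with ⟨s, hs⟩
        omega
      exact dvd_sub h1 h2
    exact cancel_two_pow (a := m-k+1) (by simpa [show m-k+1+1 = m-k+2 by omega] using hdvd)

def adig (f : (Fin m → ZMod 2) → ZMod 4) : (Fin m → ZMod 2) → ZMod 2 :=
  fun x => ((f x).val : ZMod 2)

def bdig (f : (Fin m → ZMod 2) → ZMod 4) : (Fin m → ZMod 2) → ZMod 2 :=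
  fun x => (((f x).val / 2 : ℕ) : ZMod 2)

def cdig (f : (Fin m → ZMod 2) → ZMod 4) : (Fin m → ZMod 2) → ZMod 2 :=
  fun x => adig f x + bdig f x

lemma point_dec (z : ZMod 4) (s : ZMod 2) :
    (2:ℂ) * (Complex.I ^ z.val * (-1 : ℂ) ^ s.val)
      = ((chi (((z.val / 2 : ℕ) : ZMod 2) + s)
          + chi ((((z.val : ℕ) : ZMod 2) + ((z.val / 2 : ℕ) : ZMod 2)) + s) : ℤ) : ℂ)
        + ((chi (((z.val / 2 : ℕ) : ZMod 2) + s)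
          - chi ((((z.val : ℕ) : ZMod 2) + ((z.val / 2 : ℕ) : ZMod 2)) + s) : ℤ) : ℂ)
          * Complex.I := by
  have hz : z = 0 ∨ z = 1 ∨ z = 2 ∨ z = 3 := by revert z; decide
  have hs : s = 0 ∨ s = 1 := by revert s; decide
  rcases hz with rfl | rfl | rfl | rfl <;> rcases hs with rfl | rfl
  · have h1 : (chi (((((0 : ZMod 4)).val / 2 : ℕ) : ZMod 2) + (0 : ZMod 2)) : ℤ) = 1 := by decide
    have h2 : (chi ((((((0 : ZMod 4)).val : ℕ) : ZMod 2) + ((((0 : ZMod 4)).val / 2 : ℕ) : ZMod 2)) + (0 : ZMod 2)) : ℤ) = 1 := by decide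
    rw [h1, h2]
    norm_num [show ((0 : ZMod 4)).val = 0 from rfl, show ((0 : ZMod 2)).val = 0 from rfl,
      pow_succ, Complex.I_sq]
  · have h1 : (chi (((((0 : ZMod 4)).val / 2 : ℕ) : ZMod 2) + (1 : ZMod 2)) : ℤ) = -1 := by decide
    have h2 : (chi ((((((0 : ZMod 4)).val : ℕ) : ZMod 2) + ((((0 : ZMod 4)).val / 2 : ℕ) : ZMod 2)) + (1 : ZMod 2)) : ℤ) = -1 := by decide
    rw [h1, h2]
    norm_num [show ((0 : ZMod 4)).val = 0 from rfl, show ((1 : ZMod 2)).val = 1 from rfl,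
      pow_succ, Complex.I_sq]
  · have h1 : (chi (((((1 : ZMod 4)).val / 2 : ℕ) : ZMod 2) + (0 : ZMod 2)) : ℤ) = 1 := by decide
    have h2 : (chi ((((((1 : ZMod 4)).val : ℕ) : ZMod 2) + ((((1 : ZMod 4)).val / 2 : ℕ) : ZMod 2)) + (0 : ZMod 2)) : ℤ) = -1 := by decide
    rw [h1, h2]
    norm_num [show ((1 : ZMod 4)).val = 1 from rfl, show ((0 : ZMod 2)).val = 0 from rfl,
      pow_succ, Complex.I_sq]
  · have h1 : (chi (((((1 : ZMod 4)).val / 2 : ℕ) : ZMod 2) + (1 : ZMod 2)) : ℤ) = -1 := by decide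
    have h2 : (chi ((((((1 : ZMod 4)).val : ℕ) : ZMod 2) + ((((1 : ZMod 4)).val / 2 : ℕ) : ZMod 2)) + (1 : ZMod 2)) : ℤ) = 1 := by decide
    rw [h1, h2]
    norm_num [show ((1 : ZMod 4)).val = 1 from rfl, show ((1 : ZMod 2)).val = 1 from rfl,
      pow_succ, Complex.I_sq]
  · have h1 : (chi (((((2 : ZMod 4)).val / 2 : ℕ) : ZMod 2) + (0 : ZMod 2)) : ℤ) = -1 := by decide
    have h2 : (chi ((((((2 : ZMod 4)).val : ℕ) : ZMod 2) + ((((2 : ZMod 4)).val / 2 : ℕ) : ZMod 2)) + (0 : ZMod 2)) : ℤ) = -1 := by decide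
    rw [h1, h2]
    norm_num [show ((2 : ZMod 4)).val = 2 from rfl, show ((0 : ZMod 2)).val = 0 from rfl,
      pow_succ, Complex.I_sq]
  · have h1 : (chi (((((2 : ZMod 4)).val / 2 : ℕ) : ZMod 2) + (1 : ZMod 2)) : ℤ) = 1 := by decide
    have h2 : (chi ((((((2 : ZMod 4)).val : ℕ) : ZMod 2) + ((((2 : ZMod 4)).val / 2 : ℕ) : ZMod 2)) + (1 : ZMod 2)) : ℤ) = 1 := by decide
    rw [h1, h2]
    norm_num [show ((2 : ZMod 4)).val = 2 from rfl, show ((1 : ZMod 2)).val = 1 from rfl,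
      pow_succ, Complex.I_sq]
  · have h1 : (chi (((((3 : ZMod 4)).val / 2 : ℕ) : ZMod 2) + (0 : ZMod 2)) : ℤ) = -1 := by decide
    have h2 : (chi ((((((3 : ZMod 4)).val : ℕ) : ZMod 2) + ((((3 : ZMod 4)).val / 2 : ℕ) : ZMod 2)) + (0 : ZMod 2)) : ℤ) = 1 := by decide
    rw [h1, h2]
    norm_num [show ((3 : ZMod 4)).val = 3 from rfl, show ((0 : ZMod 2)).val = 0 from rfl,
      pow_succ, Complex.I_sq]
  · have h1 : (chi (((((3 : ZMod 4)).val / 2 : ℕ) : ZMod 2) + (1 : ZMod 2)) : ℤ) = 1 := by decide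
    have h2 : (chi ((((((3 : ZMod 4)).val : ℕ) : ZMod 2) + ((((3 : ZMod 4)).val / 2 : ℕ) : ZMod 2)) + (1 : ZMod 2)) : ℤ) = -1 := by decide
    rw [h1, h2]
    norm_num [show ((3 : ZMod 4)).val = 3 from rfl, show ((1 : ZMod 2)).val = 1 from rfl,
      pow_succ, Complex.I_sq]


lemma fourier_dec (f : (Fin m → ZMod 2) → ZMod 4) (u : Fin m → ZMod 2) :
    2 * fourier4 f u
      = ((Wt (bdig f) u + Wt (cdig f) u : ℤ) : ℂ)
        + ((Wt (bdig f) u - Wt (cdig f) u : ℤ) : ℂ) * Complex.I := by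
  unfold fourier4 Wt
  rw [Finset.mul_sum]
  have step : ∀ x : Fin m → ZMod 2,
      (2:ℂ) * (Complex.I ^ (f x).val * (-1 : ℂ) ^ (∑ j, u j * x j).val)
        = ((chi (bdig f x + ∑ j, u j * x j) + chi (cdig f x + ∑ j, u j * x j) : ℤ) : ℂ)
          + ((chi (bdig f x + ∑ j, u j * x j) - chi (cdig f x + ∑ j, u j * x j) : ℤ) : ℂ)
            * Complex.I := by
    intro x
    exact point_dec (f x) (∑ j, u j * x j)
  rw [Finset.sum_congr rfl (fun x _ => step x)]
  rw [Finset.sum_add_distrib, ← Finset.sum_mul]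
  push_cast
  rw [Finset.sum_add_distrib, Finset.sum_sub_distrib]

lemma walsh_sq (f : (Fin m → ZMod 2) → ZMod 4) (u : Fin m → ZMod 2)
    (hb : Complex.normSq (fourier4 f u) = 2 ^ m) :
    (Wt (bdig f) u)^2 + (Wt (cdig f) u)^2 = 2^(m+1) := by
  have h := fourier_dec f u
  have h2 : Complex.normSq (2 * fourier4 f u) = 4 * 2^m := by
    rw [Complex.normSq_mul, hb]
    norm_num
  rw [h] at h2
  set A : ℤ := Wt (bdig f) u + Wt (cdig f) u with hA
  set B : ℤ := Wt (bdig f) u - Wt (cdig f) u with hB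
  have hcast : ((A : ℂ)) + ((B : ℂ)) * Complex.I
      = ((A : ℝ) : ℂ) + ((B : ℝ) : ℂ) * Complex.I := by
    push_cast
    ring
  rw [hcast, Complex.normSq_add_mul_I] at h2
  have h3 : (A:ℝ)^2 + (B:ℝ)^2 = 4 * 2^m := h2
  have h4 : A^2 + B^2 = 4 * 2^m := by exact_mod_cast h3
  have hexp : (Wt (bdig f) u + Wt (cdig f) u)^2 + (Wt (bdig f) u - Wt (cdig f) u)^2
      = 2 * ((Wt (bdig f) u)^2 + (Wt (cdig f) u)^2) := by ring
  have h5 : 2 * ((Wt (bdig f) u)^2 + (Wt (cdig f) u)^2) = 2 * 2^(m+1) := by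
    rw [← hexp, h4, pow_succ]
    ring
  linarith

def indic (T : Finset (Fin m)) : Fin m → ZMod 2 := fun j => if j ∈ T then 1 else 0

def suppF (x : Fin m → ZMod 2) : Finset (Fin m) := Finset.univ.filter (fun j => x j = 1)

lemma indic_supp (x : Fin m → ZMod 2) : indic (suppF x) = x := by
  funext j
  rcases zmod2_cases (x j) with h | h <;>
    simp [indic, suppF, h]

lemma indic_mem_cube (T : Finset (Fin m)) : indic T ∈ cube T := by
  rw [mem_cube]
  intro j hj
  simp [indic, hj]

lemma supp_indic (T : Finset (Fin m)) : suppF (indic T) = T := by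
  ext j
  by_cases hj : j ∈ T <;> simp [suppF, indic, hj]

lemma supp_subset_of_mem_cube {T : Finset (Fin m)} {x : Fin m → ZMod 2}
    (hx : x ∈ cube T) : suppF x ⊆ T := by
  intro j hj
  rw [suppF, Finset.mem_filter] at hj
  by_contra hc
  have := mem_cube.mp hx j hc
  rw [this] at hj
  exact absurd hj.2 (by decide)

lemma zero_of_gam_zero (p : (Fin m → ZMod 2) → ZMod 2)
    (h : ∀ S : Finset (Fin m), gam p S = 0) : ∀ x, p x = 0 := by
  have key : ∀ n : ℕ, ∀ T : Finset (Fin m), T.card ≤ n → p (indic T) = 0 := by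
    intro n
    induction n with
    | zero =>
      intro T hT
      have hTe : T = ∅ := Finset.card_eq_zero.mp (Nat.le_zero.mp hT)
      subst hTe
      have := h ∅
      rw [gam, cube_empty] at this
      have h0 : indic (∅ : Finset (Fin m)) = 0 := by
        funext j; simp [indic]
      rw [h0]
      simpa using this
    | succ n ih =>
      intro T hT
      have hsum := h T
      rw [gam] at hsum
      rw [← Finset.add_sum_erase _ _ (indic_mem_cube T)] at hsum
      have hz : ∑ x ∈ (cube T).erase (indic T), p x = 0 := by
        refine Finset.sum_eq_zero (fun x hx => ?_)
        have hx1 : x ∈ cube T := Finset.mem_of_mem_erase hx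
        have hx2 : x ≠ indic T := Finset.ne_of_mem_erase hx
        have hsub : suppF x ⊆ T := supp_subset_of_mem_cube hx1
        have hne : suppF x ≠ T := by
          intro hc
          apply hx2
          rw [← indic_supp x, hc]
        have hlt : (suppF x).card < T.card :=
          Finset.card_lt_card (Finset.ssubset_iff_subset_ne.mpr ⟨hsub, hne⟩)
        have : p (indic (suppF x)) = 0 := ih (suppF x) (by omega)
        rwa [indic_supp] at this
      rw [hz, add_zero] at hsum
      exact hsum
  intro x
  rw [← indic_supp x]
  exact key (suppF x).card _ le_rfl

lemma gam_add (p q : (Fin m → ZMod 2) → ZMod 2) (S : Finset (Fin m)) :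
    gam (fun x => p x + q x) S = gam p S + gam q S := by
  unfold gam
  rw [Finset.sum_add_distrib]

lemma digit_ext (z w : ZMod 4) (h1 : ((z.val : ℕ) : ZMod 2) = ((w.val : ℕ) : ZMod 2))
    (h2 : ((z.val / 2 : ℕ) : ZMod 2) = ((w.val / 2 : ℕ) : ZMod 2)) : z = w := by
  revert h1 h2
  revert z w
  decide

lemma main_vanish (hm : 2 < m) (f : (Fin m → ZMod 2) → ZMod 4)
    (hb : ∀ u, Complex.normSq (fourier4 f u) = 2 ^ m)
    (S : Finset (Fin m)) (hS : (m+1)/2 < S.card) :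
    gam (adig f) S = 0 ∧ gam (bdig f) S = 0 := by
  have hm0 : 0 < m := by omega
  have hw : ∀ u, (Wt (bdig f) u)^2 + (Wt (cdig f) u)^2 = 2^(m+1) :=
    fun u => walsh_sq f u (hb u)
  have hclb : ∀ u : Fin m → ZMod 2, ∃ t : ℤ, Wt (bdig f) u = 2^((m+1)/2) * t ∧
      (t = 0 ∨ t = 1 ∨ t = -1) ∧ (Even m → t = 1 ∨ t = -1) :=
    fun u => classify hm0 (hw u)
  have hclc : ∀ u : Fin m → ZMod 2, ∃ t : ℤ, Wt (cdig f) u = 2^((m+1)/2) * t ∧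
      (t = 0 ∨ t = 1 ∨ t = -1) ∧ (Even m → t = 1 ∨ t = -1) :=
    fun u => classify hm0 (x := Wt (cdig f) u) (y := Wt (bdig f) u) (by linarith [hw u])
  have g1 : gam (bdig f) S = 0 := core_p hm _ hclb S hS
  have g2 : gam (cdig f) S = 0 := core_p hm _ hclc S hS
  refine ⟨?_, g1⟩
  have hpt : ∀ x, adig f x = bdig f x + cdig f x := by
    intro x
    have : ∀ a b : ZMod 2, a = b + (a + b) := by decide
    exact this (adig f x) (bdig f x)
  have : gam (adig f) S = gam (fun x => bdig f x + cdig f x) S := by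
    unfold gam
    exact Finset.sum_congr rfl (fun x _ => hpt x)
  rw [this, gam_add, g1, g2, add_zero]

lemma count_small (d : ℕ) :
    (Finset.univ.filter (fun S : Finset (Fin m) => S.card ≤ d)).card
      = ∑ j ∈ Finset.range (d+1), Nat.choose m j := by
  rw [Finset.card_eq_sum_card_fiberwise
    (f := fun S : Finset (Fin m) => S.card) (t := Finset.range (d+1))
    (fun S hS => by
      rw [Finset.mem_coe, Finset.mem_range]
      show S.card < d + 1
      have := (Finset.mem_filter.mp (Finset.mem_coe.mp hS)).2
      omega)]
  refine Finset.sum_congr rfl (fun j hj => ?_)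
  rw [Finset.mem_range] at hj
  have heq : (Finset.univ.filter (fun S : Finset (Fin m) => S.card ≤ d)).filter
        (fun S => S.card = j)
      = Finset.univ.filter (fun S : Finset (Fin m) => S.card = j) := by
    rw [Finset.filter_filter]
    refine Finset.filter_congr (fun S _ => ?_)
    constructor
    · exact fun h => h.2
    · exact fun h => ⟨le_trans (le_of_eq h) (by omega), h⟩
  rw [heq]
  have h2 : Finset.univ.filter (fun S : Finset (Fin m) => S.card = j)
      = Finset.powersetCard j Finset.univ := by
    rw [Finset.powersetCard_eq_filter, Finset.powerset_univ]
  rw [h2, Finset.card_powersetCard]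
  congr 1
  simp

lemma zero_not_bent (hm0 : 0 < m) :
    ¬ (Complex.normSq (fourier4 (m := m) (fun _ => (0:ZMod 4)) (fun _ => (0:ZMod 2))) = 2 ^ m) := by
  have h1 : fourier4 (m := m) (fun _ => (0:ZMod 4)) (fun _ => (0:ZMod 2)) = (2:ℂ)^m := by
    unfold fourier4
    have hterm : ∀ x : Fin m → ZMod 2,
        Complex.I ^ ((0:ZMod 4)).val * (-1:ℂ) ^ ((∑ j, (0:ZMod 2) * x j)).val = 1 := by
      intro x
      have hz : (∑ j, (0:ZMod 2) * x j) = 0 := by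
        simp
      rw [hz]
      norm_num [show ((0:ZMod 4)).val = 0 from rfl, show ((0:ZMod 2)).val = 0 from rfl]
    rw [Finset.sum_congr rfl (fun x _ => hterm x), Finset.sum_const]
    have hcard : (Finset.univ : Finset (Fin m → ZMod 2)).card = 2^m := by
      rw [Finset.card_univ]
      simp [Fintype.card_fun]
    rw [hcard]
    push_cast
    ring
  intro hc
  rw [h1, map_pow] at hc
  have h4 : Complex.normSq 2 = 4 := by
    norm_num [Complex.normSq]
  rw [h4] at hc
  have hlt : (2:ℝ)^m < 4^m := by
    refine pow_lt_pow_left₀ (by norm_num) (by norm_num) (by omega)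
  rw [hc] at hlt
  exact lt_irrefl _ hlt

/-- Rate bound for quaternary constant-amplitude codes: a code of length `2^m`, `m > 2`,
all of whose words are bent, has fewer than `4^(∑_{j ≤ ⌈m/2⌉} C(m,j))` codewords. -/
theorem stmt5 (m : ℕ) (hm : 2 < m) (Q : Finset ((Fin m → ZMod 2) → ZMod 4))
    (hQ : ∀ f ∈ Q, ∀ u, Complex.normSq (fourier4 f u) = 2 ^ m) :
    Q.card < 4 ^ (∑ j ∈ Finset.range ((m + 1) / 2 + 1), Nat.choose m j) := by
  classical
  set d := (m + 1) / 2 with hd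
  set key : ((Fin m → ZMod 2) → ZMod 4) → ({S : Finset (Fin m) // S.card ≤ d} → ZMod 2 × ZMod 2) :=
    fun f S => (gam (adig f) S.1, gam (bdig f) S.1) with hkey
  have hvan : ∀ f ∈ Q, ∀ S : Finset (Fin m), d < S.card →
      gam (adig f) S = 0 ∧ gam (bdig f) S = 0 :=
    fun f hf S hS => main_vanish hm f (hQ f hf) S hS
  have z2eq : ∀ a b : ZMod 2, a + b = 0 → a = b := by decide
  have z2self : ∀ a : ZMod 2, a + a = 0 := by decide
  have hrecon : ∀ f g : ((Fin m → ZMod 2) → ZMod 4),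
      (∀ S, gam (adig f) S = gam (adig g) S) →
      (∀ S, gam (bdig f) S = gam (bdig g) S) → f = g := by
    intro f g ha hbb
    have hA : ∀ x, adig f x = adig g x := by
      intro x
      refine z2eq _ _ ?_
      have := zero_of_gam_zero (fun x => adig f x + adig g x) (fun S => by
        rw [gam_add, ha S]; exact z2self _)
      exact this x
    have hB : ∀ x, bdig f x = bdig g x := by
      intro x
      refine z2eq _ _ ?_
      have := zero_of_gam_zero (fun x => bdig f x + bdig g x) (fun S => by
        rw [gam_add, hbb S]; exact z2self _)
      exact this x
    funext x
    exact digit_ext (f x) (g x) (hA x) (hB x)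
  have hinj : ∀ f ∈ Q, ∀ g ∈ Q, key f = key g → f = g := by
    intro f hf g hg he
    refine hrecon f g (fun S => ?_) (fun S => ?_)
    · by_cases hSd : S.card ≤ d
      · have := congrFun he ⟨S, hSd⟩
        exact (Prod.ext_iff.mp this).1
      · rw [(hvan f hf S (by omega)).1, (hvan g hg S (by omega)).1]
    · by_cases hSd : S.card ≤ d
      · have := congrFun he ⟨S, hSd⟩
        exact (Prod.ext_iff.mp this).2
      · rw [(hvan f hf S (by omega)).2, (hvan g hg S (by omega)).2]
  have hne0 : ∀ f ∈ Q, key f ≠ (fun _ => ((0:ZMod 2), (0:ZMod 2))) := by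
    intro f hf hc
    have halla : ∀ S : Finset (Fin m), gam (adig f) S = 0 := by
      intro S
      by_cases hSd : S.card ≤ d
      · have := congrFun hc ⟨S, hSd⟩
        exact (Prod.ext_iff.mp this).1
      · exact (hvan f hf S (by omega)).1
    have hallb : ∀ S : Finset (Fin m), gam (bdig f) S = 0 := by
      intro S
      by_cases hSd : S.card ≤ d
      · have := congrFun hc ⟨S, hSd⟩
        exact (Prod.ext_iff.mp this).2
      · exact (hvan f hf S (by omega)).2
    have hf0 : f = (fun _ => (0 : ZMod 4)) := by
      funext x
      refine digit_ext (f x) 0 ?_ ?_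
      · have := zero_of_gam_zero (adig f) halla x
        rw [adig] at this
        rw [this]
        rfl
      · have := zero_of_gam_zero (bdig f) hallb x
        rw [bdig] at this
        rw [this]
        rfl
    have := hQ f hf (fun _ => 0)
    rw [hf0] at this
    exact zero_not_bent (by omega) this
  -- counting
  have hsub : ∀ f ∈ Q, key f ∈
      (Finset.univ.erase (fun _ => ((0:ZMod 2), (0:ZMod 2)))) := by
    intro f hf
    exact Finset.mem_erase.mpr ⟨hne0 f hf, Finset.mem_univ _⟩
  have hcard : Q.card ≤
      (Finset.univ.erase (fun _ : {S : Finset (Fin m) // S.card ≤ d} =>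
        ((0:ZMod 2), (0:ZMod 2)))).card := by
    refine Finset.card_le_card_of_injOn key hsub ?_
    intro f hf g hg he
    exact hinj f (Finset.mem_coe.mp hf) g (Finset.mem_coe.mp hg) he
  have hK : Fintype.card ({S : Finset (Fin m) // S.card ≤ d} → ZMod 2 × ZMod 2)
      = 4 ^ (∑ j ∈ Finset.range (d+1), Nat.choose m j) := by
    rw [Fintype.card_fun]
    have h1 : Fintype.card (ZMod 2 × ZMod 2) = 4 := rfl
    have h2 : Fintype.card {S : Finset (Fin m) // S.card ≤ d}
        = ∑ j ∈ Finset.range (d+1), Nat.choose m j := by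
      rw [Fintype.card_subtype]
      exact count_small d
    rw [h1, h2]
  have herase : (Finset.univ.erase (fun _ : {S : Finset (Fin m) // S.card ≤ d} =>
      ((0:ZMod 2), (0:ZMod 2)))).card
      = 4 ^ (∑ j ∈ Finset.range (d+1), Nat.choose m j) - 1 := by
    rw [Finset.card_erase_of_mem (Finset.mem_univ _), Finset.card_univ, hK]
  rw [herase] at hcard
  have hpos : 0 < 4 ^ (∑ j ∈ Finset.range (d+1), Nat.choose m j) :=
    Nat.pow_pos (by norm_num)
  omega
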